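/- For any invertible diagonal matrix Z and symmetric matrix R_S with unit diagonal, tr(Z^{-1} R_S Z R_S) = K + ∑_{p>q} ( (ζ_q/ζ_p) + (ζ_p/ζ_q) ) ρ_{pq}², which is ≥ K + 2∑_{p>q} ρ_{pq}² = tr(R_S R_S), where ζ_p are the diagonal entries of Z and ρ_{pq} the off-diagonal entries of R_S. -/

import Mathlib

open Finset Matrix

theorem trace_conj_correlation (K : ℕ) (hK : 0 < K)
    (ζ : Fin K → ℝ) (hζ : ∀ p, 0 < ζ p)
    (R : Matrix (Fin K) (Fin K) ℝ) (hsymm : R.IsSymm)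
    (hdiag : ∀ p, R p p = 1) :
    Matrix.trace ((Matrix.diagonal ζ)⁻¹ * R * Matrix.diagonal ζ * R) =
      (K : ℝ) + ∑ p, ∑ q ∈ Finset.univ.filter (fun q : Fin K => q < p),
        (ζ q / ζ p + ζ p / ζ q) * (R p q) ^ 2 ∧
    Matrix.trace ((Matrix.diagonal ζ)⁻¹ * R * Matrix.diagonal ζ * R) ≥
      (K : ℝ) + ∑ p, ∑ q ∈ Finset.univ.filter (fun q : Fin K => q < p),
        2 * (R p q) ^ 2 ∧
    (K : ℝ) + ∑ p, ∑ q ∈ Finset.univ.filter (fun q : Fin K => q < p),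
        2 * (R p q) ^ 2 = Matrix.trace (R * R) := by
  have hRsymm : ∀ p q, R q p = R p q := fun p q => hsymm.apply p q
  -- general double-sum machinery for any g
  have split : ∀ (g : Fin K → Fin K → ℝ),
      ∑ p, ∑ q, g p q = (∑ p, g p p)
        + (∑ p, ∑ q ∈ Finset.univ.filter (fun q : Fin K => q < p), g p q)
        + (∑ p, ∑ q ∈ Finset.univ.filter (fun q : Fin K => q < p), g q p) := by
    intro g
    have swap : ∑ p, ∑ q ∈ Finset.univ.filter (fun q : Fin K => p < q), g p q
        = ∑ p, ∑ q ∈ Finset.univ.filter (fun q : Fin K => q < p), g q p := by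
      refine Finset.sum_comm' ?_
      intro x y; simp
    have inner : ∀ p : Fin K, ∑ q, g p q = g p p
        + ∑ q ∈ Finset.univ.filter (fun q : Fin K => q < p), g p q
        + ∑ q ∈ Finset.univ.filter (fun q : Fin K => p < q), g p q := by
      intro p
      have h1 : (Finset.univ.filter (fun q : Fin K => ¬ q < p))
          = insert p (Finset.univ.filter (fun q : Fin K => p < q)) := by
        ext q
        simp only [Finset.mem_filter, Finset.mem_univ, true_and, Finset.mem_insert]
        constructor
        · intro h; rcases lt_trichotomy q p with h'|h'|h'
          · exact absurd h' h
          · exact Or.inl h'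
          · exact Or.inr h'
        · rintro (rfl | h)
          · exact lt_irrefl _
          · exact not_lt_of_gt h
      rw [← Finset.sum_filter_add_sum_filter_not Finset.univ (fun q => q < p) (g p), h1,
        Finset.sum_insert (by simp)]
      ring
    rw [Finset.sum_congr rfl (fun p _ => inner p)]
    rw [Finset.sum_add_distrib, Finset.sum_add_distrib, swap]
  -- trace formulas
  have htr : ∀ (v : Fin K → ℝ), Matrix.trace (Matrix.diagonal v * R * Matrix.diagonal ζ * R)
      = ∑ p, ∑ q, (v p * ζ q) * (R p q * R q p) := by
    intro v
    simp only [Matrix.trace, Matrix.diag, Matrix.mul_apply, Matrix.diagonal_apply,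
      ite_mul, zero_mul, Finset.sum_ite_eq, Finset.mem_univ, if_true,
      Finset.sum_mul, mul_ite, mul_zero]
    congr 1; ext p
    rw [Finset.sum_comm]
    congr 1; ext q
    simp
    ring
  have hinv : (Matrix.diagonal ζ)⁻¹ = Matrix.diagonal (fun i => (ζ i)⁻¹) := by
    apply Matrix.inv_eq_right_inv
    rw [Matrix.diagonal_mul_diagonal]
    convert Matrix.diagonal_one using 2
    exact funext fun i => mul_inv_cancel₀ (hζ i).ne'
  have T1 : Matrix.trace ((Matrix.diagonal ζ)⁻¹ * R * Matrix.diagonal ζ * R)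
      = (K : ℝ) + ∑ p, ∑ q ∈ Finset.univ.filter (fun q : Fin K => q < p),
        (ζ q / ζ p + ζ p / ζ q) * (R p q) ^ 2 := by
    rw [hinv, htr, split (fun p q => ((ζ p)⁻¹ * ζ q) * (R p q * R q p))]
    have hd : ∑ p : Fin K, ((ζ p)⁻¹ * ζ p) * (R p p * R p p) = (K : ℝ) := by
      have h1 : ∀ p : Fin K, ((ζ p)⁻¹ * ζ p) * (R p p * R p p) = 1 := fun p => by
        rw [hdiag, inv_mul_cancel₀ (hζ p).ne']; ring
      simp [h1]
    rw [hd, add_assoc, ← Finset.sum_add_distrib]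
    congr 1
    refine Finset.sum_congr rfl fun p _ => ?_
    rw [← Finset.sum_add_distrib]
    refine Finset.sum_congr rfl fun q _ => ?_
    rw [hRsymm p q]
    field_simp
  refine ⟨T1, ?_, ?_⟩
  · rw [T1]
    apply add_le_add_right
    refine Finset.sum_le_sum fun p _ => Finset.sum_le_sum fun q _ => ?_
    have h1 : 0 ≤ (R p q) ^ 2 := sq_nonneg _
    have h2 : 2 ≤ ζ q / ζ p + ζ p / ζ q := by
      have hp := hζ p; have hq := hζ q
      rw [div_add_div _ _ hp.ne' hq.ne', le_div_iff₀ (by positivity)]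
      nlinarith [sq_nonneg (ζ p - ζ q)]
    exact mul_le_mul_of_nonneg_right h2 h1
  · have : Matrix.trace (R * R) = ∑ p, ∑ q, R p q * R q p := by
      simp [Matrix.trace, Matrix.diag, Matrix.mul_apply]
    rw [this, split (fun p q => R p q * R q p)]
    have hd : ∑ p : Fin K, R p p * R p p = (K : ℝ) := by simp [hdiag]
    rw [hd, add_assoc, ← Finset.sum_add_distrib]
    congr 1
    refine Finset.sum_congr rfl fun p _ => ?_
    rw [← Finset.sum_add_distrib]
    refine Finset.sum_congr rfl fun q _ => ?_
    rw [hRsymm p q]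
    ring
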